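/- Let H be a finite-dimensional complex inner product space. The map sending a commutative unital star-subalgebra C of H →L[ℂ] H to the set Proj(C) = { LinearMap.range p | p ∈ C, star p = p and p * p = p } of ranges of its self-adjoint idempotents is a bijection from the set of commutative unital star-subalgebras of H →L[ℂ] H onto the set of Boolean subalgebras of the subspace lattice of H, i.e. sets L of subspaces containing ⊥ and ⊤, closed under ⊓, ⊔ and orthogonal complement ᗮ, and distributive (∀ K, M, N ∈ L, K ⊓ (M ⊔ N) = (K ⊓ M) ⊔ (K ⊓ N)); its inverse sends L to the linear span of the orthogonal projections { P_K | K ∈ L } inside H →L[ℂ] H. -/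

import Mathlib

/-- The orthogonal projection of `H` onto `K`, as a continuous endomorphism `P_K` of `H`. -/
noncomputable def projCLM {H : Type*} [NormedAddCommGroup H] [InnerProductSpace ℂ H]
    [FiniteDimensional ℂ H] (K : Submodule ℂ H) : H →L[ℂ] H :=
  K.subtypeL.comp K.orthogonalProjectionOnto

set_option linter.unusedSectionVars false
set_option linter.unusedVariables false

namespace ProjAux

variable {H : Type*} [NormedAddCommGroup H] [InnerProductSpace ℂ H] [FiniteDimensional ℂ H]

local notation "A" => H →L[ℂ] H

lemma projCLM_apply (K : Submodule ℂ H) (x : H) :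
    projCLM K x = (K.orthogonalProjectionOnto x : H) := rfl

lemma projCLM_mem (K : Submodule ℂ H) (x : H) : projCLM K x ∈ K :=
  (K.orthogonalProjectionOnto x).2

lemma projCLM_eq_self {K : Submodule ℂ H} {x : H} (hx : x ∈ K) : projCLM K x = x :=
  K.starProjection_eq_self_iff.mpr hx

lemma sub_projCLM_mem {K : Submodule ℂ H} (x : H) : x - projCLM K x ∈ Kᗮ :=
  K.sub_starProjection_mem_orthogonal x

lemma projCLM_eq_zero {K : Submodule ℂ H} {x : H} (hx : x ∈ Kᗮ) : projCLM K x = 0 := by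
  exact K.eq_starProjection_of_mem_orthogonal (u := x) (v := 0) K.zero_mem
    (by simpa using hx)

lemma projCLM_eq {K : Submodule ℂ H} {x a : H} (ha : a ∈ K) (h : x - a ∈ Kᗮ) :
    projCLM K x = a :=
  K.eq_starProjection_of_mem_orthogonal ha h

lemma star_projCLM (K : Submodule ℂ H) : star (projCLM K) = projCLM K :=
  (isSelfAdjoint_starProjection K)

lemma projCLM_idem (K : Submodule ℂ H) : projCLM K * projCLM K = projCLM K := by
  ext x
  exact projCLM_eq_self (projCLM_mem K x)

lemma range_projCLM (K : Submodule ℂ H) : LinearMap.range ((projCLM K : H →L[ℂ] H) : H →ₗ[ℂ] H) = K := by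
  ext x
  constructor
  · rintro ⟨y, rfl⟩; exact projCLM_mem K y
  · intro hx; exact ⟨x, projCLM_eq_self hx⟩

lemma projCLM_bot : projCLM (⊥ : Submodule ℂ H) = 0 := by
  ext x; exact projCLM_eq_zero (by simp)

lemma projCLM_top : projCLM (⊤ : Submodule ℂ H) = 1 := by
  ext x; exact projCLM_eq_self trivial





lemma mem_range_iff_apply {p : H →L[ℂ] H} (h2 : p * p = p) {x : H} :
    x ∈ LinearMap.range (p : H →ₗ[ℂ] H) ↔ p x = x := by
  constructor
  · rintro ⟨y, rfl⟩
    have := congrArg (fun T : H →L[ℂ] H => T y) h2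
    simpa using this
  · intro h; exact ⟨x, h⟩

lemma apply_eq_zero_iff {p : H →L[ℂ] H} (h1 : star p = p) {x : H} :
    p x = 0 ↔ x ∈ (LinearMap.range (p : H →ₗ[ℂ] H))ᗮ := by
  have hsym : ∀ u v : H, (inner ℂ (p u) v : ℂ) = inner ℂ u (p v) := fun u v =>
    ContinuousLinearMap.isSelfAdjoint_iff_isSymmetric.mp h1 u v
  constructor
  · intro h
    rw [Submodule.mem_orthogonal]
    rintro u ⟨y, rfl⟩
    calc (inner ℂ (p y) x : ℂ) = inner ℂ y (p x) := hsym y x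
      _ = (0 : ℂ) := by rw [h]; exact inner_zero_right y
  · intro h
    have h0 : (inner ℂ (p (p x)) x : ℂ) = 0 :=
      (Submodule.mem_orthogonal _ x).mp h _ ⟨p x, rfl⟩
    have key : (inner ℂ (p x) (p x) : ℂ) = 0 := by
      rw [hsym x (p x)]
      exact inner_eq_zero_symm.mpr h0
    exact inner_self_eq_zero.mp key

lemma selfAdjoint_idem_eq_projCLM {p : H →L[ℂ] H} (h1 : star p = p) (h2 : p * p = p) :
    projCLM (LinearMap.range (p : H →ₗ[ℂ] H)) = p := by
  ext x
  refine projCLM_eq ⟨x, rfl⟩ ?_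
  rw [← apply_eq_zero_iff h1]
  have := congrArg (fun T : H →L[ℂ] H => T x) h2
  simp only [ContinuousLinearMap.mul_apply] at this
  simp [map_sub, this]

lemma projCLM_mul_of_le {K M : Submodule ℂ H} (h : M ≤ K) :
    projCLM K * projCLM M = projCLM M := by
  ext x; exact projCLM_eq_self (h (projCLM_mem M x))

lemma projCLM_mul_of_le' {K M : Submodule ℂ H} (h : M ≤ K) :
    projCLM M * projCLM K = projCLM M := by
  have := congrArg star (projCLM_mul_of_le h)
  rwa [star_mul, star_projCLM, star_projCLM] at this

lemma projCLM_mul_of_ortho {K M : Submodule ℂ H} (h : M ≤ Kᗮ) :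
    projCLM K * projCLM M = 0 := by
  ext x
  exact projCLM_eq_zero (h (projCLM_mem M x))

lemma projCLM_mul_of_ortho' {K M : Submodule ℂ H} (h : M ≤ Kᗮ) :
    projCLM M * projCLM K = 0 := by
  have := congrArg star (projCLM_mul_of_ortho h)
  rwa [star_mul, star_projCLM, star_projCLM, star_zero] at this

lemma projCLM_add_orthogonal (K : Submodule ℂ H) :
    projCLM K + projCLM Kᗮ = 1 := by
  ext x
  simp only [ContinuousLinearMap.add_apply, ContinuousLinearMap.one_apply]
  exact K.starProjection_add_starProjection_orthogonal x

/-- Key commuting lemma. -/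
lemma projCLM_mul_projCLM {K M : Submodule ℂ H}
    (hM : (K ⊓ M) ⊔ (M ⊓ Kᗮ) = M) :
    projCLM K * projCLM M = projCLM (K ⊓ M) := by
  ext x
  have hx : projCLM M x ∈ K ⊓ M ⊔ M ⊓ Kᗮ := by rw [hM]; exact projCLM_mem M x
  obtain ⟨a, ha, b, hb, hab⟩ := Submodule.mem_sup.mp hx
  have hPK : projCLM K (projCLM M x) = a := by
    rw [← hab, map_add, projCLM_eq_self (ha.1), projCLM_eq_zero hb.2, add_zero]
  have : projCLM (K ⊓ M) x = a := by
    refine projCLM_eq ha ?_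
    have h1 : x - projCLM M x ∈ (K ⊓ M)ᗮ :=
      Submodule.orthogonal_le inf_le_right (sub_projCLM_mem x)
    have h2 : b ∈ (K ⊓ M)ᗮ := Submodule.orthogonal_le inf_le_left hb.2
    have : x - a = (x - projCLM M x) + b := by rw [← hab]; abel
    rw [this]; exact Submodule.add_mem _ h1 h2
  simp only [ContinuousLinearMap.mul_apply, hPK, this]



section idems
variable {p q : H →L[ℂ] H}

lemma one_sub_idem (h2p : p * p = p) : (1 - p) * (1 - p) = 1 - p := by
  have : (1 - p) * (1 - p) = 1 - p - p + p * p := by noncomm_ring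
  rw [this, h2p]; abel

lemma mul_idem_of_comm (h2p : p * p = p) (h2q : q * q = q) (hc : p * q = q * p) :
    (p * q) * (p * q) = p * q := by
  calc (p * q) * (p * q) = p * (q * p) * q := by noncomm_ring
    _ = p * (p * q) * q := by rw [← hc]
    _ = (p * p) * (q * q) := by noncomm_ring
    _ = p * q := by rw [h2p, h2q]

lemma range_mul_of_comm (h2p : p * p = p) (h2q : q * q = q) (hc : p * q = q * p) :
    LinearMap.range ((p * q : H →L[ℂ] H) : H →ₗ[ℂ] H) = LinearMap.range (p : H →ₗ[ℂ] H) ⊓ LinearMap.range (q : H →ₗ[ℂ] H) := by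
  ext x
  rw [mem_range_iff_apply (mul_idem_of_comm h2p h2q hc), Submodule.mem_inf,
    mem_range_iff_apply h2p, mem_range_iff_apply h2q]
  have happ : (p * q) x = p (q x) := rfl
  constructor
  · intro h
    rw [happ] at h
    have hqp : q (p x) = x := by
      have := congrArg (fun T : H →L[ℂ] H => T x) hc
      simp only [ContinuousLinearMap.mul_apply] at this
      rw [← this]; exact h
    constructor
    · calc p x = p (p (q x)) := by rw [h]
        _ = (p * p) (q x) := rfl
        _ = p (q x) := by rw [h2p]
        _ = x := h
    · calc q x = q (q (p x)) := by rw [hqp]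
        _ = (q * q) (p x) := rfl
        _ = q (p x) := by rw [h2q]
        _ = x := hqp
  · rintro ⟨hp, hq⟩
    rw [happ, hq, hp]

lemma sup_idem_of_comm (h2p : p * p = p) (h2q : q * q = q) (hc : p * q = q * p) :
    (p + q - p * q) * (p + q - p * q) = p + q - p * q := by
  have hr : p + q - p * q = 1 - (1 - p) * (1 - q) := by noncomm_ring
  have hcomm' : (1 - q) * (1 - p) = (1 - p) * (1 - q) := by
    have e1 : (1 - q) * (1 - p) = 1 - q - p + q * p := by noncomm_ring
    have e2 : (1 - p) * (1 - q) = 1 - p - q + p * q := by noncomm_ring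
    rw [e1, e2, hc]; abel
  have hw : ((1 - p) * (1 - q)) * ((1 - p) * (1 - q)) = (1 - p) * (1 - q) := by
    calc ((1 - p) * (1 - q)) * ((1 - p) * (1 - q))
        = (1 - p) * ((1 - q) * (1 - p)) * (1 - q) := by noncomm_ring
      _ = (1 - p) * ((1 - p) * (1 - q)) * (1 - q) := by rw [hcomm']
      _ = ((1 - p) * (1 - p)) * ((1 - q) * (1 - q)) := by noncomm_ring
      _ = (1 - p) * (1 - q) := by rw [one_sub_idem h2p, one_sub_idem h2q]
  rw [hr]
  have : (1 - (1 - p) * (1 - q)) * (1 - (1 - p) * (1 - q)) =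
      1 - (1 - p) * (1 - q) - (1 - p) * (1 - q) + ((1 - p) * (1 - q)) * ((1 - p) * (1 - q)) := by
    noncomm_ring
  rw [this, hw]; abel

lemma range_sup_of_comm (h2p : p * p = p) (h2q : q * q = q) (hc : p * q = q * p) :
    LinearMap.range ((p + q - p * q : H →L[ℂ] H) : H →ₗ[ℂ] H) = LinearMap.range (p : H →ₗ[ℂ] H) ⊔ LinearMap.range (q : H →ₗ[ℂ] H) := by
  have h2r := sup_idem_of_comm h2p h2q hc
  have hrp : (p + q - p * q) * p = p := by
    calc (p + q - p * q) * p = p * p + q * p - p * (q * p) := by noncomm_ring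
      _ = p * p + q * p - p * (p * q) := by rw [hc]
      _ = p * p + q * p - (p * p) * q := by noncomm_ring
      _ = p + q * p - p * q := by rw [h2p]
      _ = p + p * q - p * q := by rw [hc]
      _ = p := by abel
  have hrq : (p + q - p * q) * q = q := by
    calc (p + q - p * q) * q = p * q + q * q - p * (q * q) := by noncomm_ring
      _ = p * q + q - p * q := by rw [h2q]
      _ = q := by abel
  apply le_antisymm
  · rintro y ⟨x, rfl⟩
    have : (p + q - p * q) x = p x + q (x - p x) := by
      have : (p + q - p * q) x = (p + q - q * p) x := by rw [hc]
      rw [this]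
      simp only [ContinuousLinearMap.sub_apply, ContinuousLinearMap.add_apply,
        ContinuousLinearMap.mul_apply, map_sub]
      abel
    rw [ContinuousLinearMap.coe_coe, this]
    exact Submodule.mem_sup.mpr ⟨p x, ⟨x, rfl⟩, q (x - p x), ⟨x - p x, rfl⟩, rfl⟩
  · intro x hx
    rw [mem_range_iff_apply h2r]
    obtain ⟨a, ⟨y, rfl⟩, b, ⟨z, rfl⟩, rfl⟩ := Submodule.mem_sup.mp hx
    have e1 : (p + q - p * q) (p y) = p y := by
      have := congrArg (fun T : H →L[ℂ] H => T y) hrp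
      simpa using this
    have e2 : (p + q - p * q) (q z) = q z := by
      have := congrArg (fun T : H →L[ℂ] H => T z) hrq
      simpa using this
    rw [map_add, ContinuousLinearMap.coe_coe, ContinuousLinearMap.coe_coe, e1, e2]

lemma range_one_sub (h1p : star p = p) (h2p : p * p = p) :
    LinearMap.range ((1 - p : H →L[ℂ] H) : H →ₗ[ℂ] H) = (LinearMap.range (p : H →ₗ[ℂ] H))ᗮ := by
  ext x
  rw [mem_range_iff_apply (one_sub_idem h2p), ← apply_eq_zero_iff h1p]
  simp only [ContinuousLinearMap.sub_apply, ContinuousLinearMap.one_apply]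
  constructor
  · intro h
    have h' : x - p x = x := h
    have := sub_eq_self.mp h'
    exact this
  · intro h; rw [h, sub_zero]

end idems


section spectral

open Polynomial

variable {S : H →L[ℂ] H}

noncomputable def eigFinset (S : H →L[ℂ] H) : Finset ℂ :=
  (Module.End.finite_hasEigenvalue (↑S : Module.End ℂ H)).toFinset

lemma mem_eigFinset {μ : ℂ} :
    μ ∈ eigFinset S ↔ Module.End.HasEigenvalue (↑S : Module.End ℂ H) μ :=
  Set.Finite.mem_toFinset _

lemma aeval_eigen {μ : ℂ} {x : H} (hx : S x = μ • x) (q : Polynomial ℂ) :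
    (Polynomial.aeval S q) x = Polynomial.eval μ q • x := by
  induction q using Polynomial.induction_on with
  | C a =>
      rw [Polynomial.aeval_C, Algebra.algebraMap_eq_smul_one]
      simp
  | add p q hp hq =>
      simp [map_add, hp, hq, add_smul]
  | monomial n a ih =>
      have hrw : (Polynomial.C a * Polynomial.X ^ (n + 1)) =
          (Polynomial.C a * Polynomial.X ^ n) * Polynomial.X := by ring
      rw [hrw, map_mul, Polynomial.aeval_X, ContinuousLinearMap.mul_apply, hx, map_smul, ih,
        smul_smul]
      congr 1
      simp only [Polynomial.eval_mul, Polynomial.eval_C, Polynomial.eval_pow, Polynomial.eval_X]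
      ring

lemma aeval_mem_starSubalgebra {C : StarSubalgebra ℂ (H →L[ℂ] H)} (hS : S ∈ C)
    (q : Polynomial ℂ) : Polynomial.aeval S q ∈ C := by
  have hle : Algebra.adjoin ℂ {S} ≤ C.toSubalgebra :=
    Algebra.adjoin_le (by simpa using hS)
  exact hle (Polynomial.aeval_mem_adjoin_singleton ℂ S)

lemma iSup_eigenspaces_eq_top (hS : star S = S) :
    ⨆ μ : ℂ, Module.End.eigenspace (↑S : Module.End ℂ H) μ = ⊤ := by
  have hsymm : (↑S : H →ₗ[ℂ] H).IsSymmetric :=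
    ContinuousLinearMap.isSelfAdjoint_iff_isSymmetric.mp hS
  have := hsymm.orthogonalComplement_iSup_eigenspaces_eq_bot
  rwa [Submodule.orthogonal_eq_bot_iff] at this

lemma eigenspaces_ortho (hS : star S = S) {μ ν : ℂ} (h : μ ≠ ν) :
    Module.End.eigenspace (↑S : Module.End ℂ H) μ ≤
      (Module.End.eigenspace (↑S : Module.End ℂ H) ν)ᗮ := by
  have hsymm : (↑S : H →ₗ[ℂ] H).IsSymmetric :=
    ContinuousLinearMap.isSelfAdjoint_iff_isSymmetric.mp hS
  intro x hx
  rw [Submodule.mem_orthogonal]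
  intro u hu
  exact hsymm.orthogonalFamily_eigenspaces h.symm (⟨u, hu⟩ : _) (⟨x, hx⟩ : _)

lemma ext_on_eigenspaces (hS : star S = S) {f g : H →L[ℂ] H}
    (h : ∀ μ : ℂ, ∀ x ∈ Module.End.eigenspace (↑S : Module.End ℂ H) μ, f x = g x) :
    f = g := by
  ext x
  have hx : x ∈ ⨆ μ : ℂ, Module.End.eigenspace (↑S : Module.End ℂ H) μ := by
    rw [iSup_eigenspaces_eq_top hS]; trivial
  refine Submodule.iSup_induction _ (motive := fun y => f y = g y) hx
    (fun μ y hy => h μ y hy) (by simp) (fun y z hy hz => by show f (y+z) = g (y+z); rw [map_add, map_add]; show f y + f z = g y + g z; rw [hy, hz])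

lemma apply_of_mem_eigenspace {μ : ℂ} {x : H}
    (hx : x ∈ Module.End.eigenspace (↑S : Module.End ℂ H) μ) : S x = μ • x := by
  have := Module.End.mem_eigenspace_iff.mp hx
  simpa using this

lemma projCLM_eigenspace_eq_aeval (hS : star S = S) {μ : ℂ} (hμ : μ ∈ eigFinset S) :
    projCLM (Module.End.eigenspace (↑S : Module.End ℂ H) μ) =
      Polynomial.aeval S (Lagrange.basis (eigFinset S) id μ) := by
  refine ext_on_eigenspaces hS (fun ν x hx => ?_)
  rcases eq_or_ne x 0 with rfl | hx0
  · simp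
  · have hν : ν ∈ eigFinset S :=
      mem_eigFinset.mpr (Module.End.hasEigenvalue_of_hasEigenvector ⟨hx, hx0⟩)
    have hSx : S x = ν • x := apply_of_mem_eigenspace hx
    rw [aeval_eigen hSx]
    rcases eq_or_ne ν μ with rfl | hne
    · have h1 : Polynomial.eval ν (Lagrange.basis (eigFinset S) id ν) = 1 := by
        simpa using Lagrange.eval_basis_self (F := ℂ) (s := eigFinset S) (v := id) (Set.injOn_id _) hμ
      rw [projCLM_eq_self hx, h1, one_smul]
    · have h0 : Polynomial.eval ν (Lagrange.basis (eigFinset S) id μ) = 0 := by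
        simpa using Lagrange.eval_basis_of_ne (F := ℂ) (s := eigFinset S) (v := id) (i := μ) (j := ν) (Ne.symm hne) hν
      rw [projCLM_eq_zero (eigenspaces_ortho hS hne hx), h0, zero_smul]

lemma selfadj_eq_sum_proj (hS : star S = S) :
    S = ∑ μ ∈ eigFinset S, μ • projCLM (Module.End.eigenspace (↑S : Module.End ℂ H) μ) := by
  refine ext_on_eigenspaces hS (fun ν x hx => ?_)
  have hSx : S x = ν • x := apply_of_mem_eigenspace hx
  rcases eq_or_ne x 0 with rfl | hx0
  · simp
  · have hν : ν ∈ eigFinset S :=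
      mem_eigFinset.mpr (Module.End.hasEigenvalue_of_hasEigenvector ⟨hx, hx0⟩)
    rw [hSx, ContinuousLinearMap.sum_apply]
    rw [Finset.sum_eq_single_of_mem ν hν]
    · rw [ContinuousLinearMap.smul_apply, projCLM_eq_self hx]
    · intro μ _ hne
      rw [ContinuousLinearMap.smul_apply, projCLM_eq_zero (eigenspaces_ortho hS (Ne.symm hne) hx),
        smul_zero]

end spectral


section spanC

variable (C : StarSubalgebra ℂ (H →L[ℂ] H))

def ProjSet : Set (Submodule ℂ H) :=
  {K | ∃ p ∈ C, star p = p ∧ p * p = p ∧ LinearMap.range (p : H →ₗ[ℂ] H) = K}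

def genSet : Set (H →L[ℂ] H) := {T | ∃ K ∈ ProjSet C, T = projCLM K}

lemma genSet_subset : genSet C ⊆ (C : Set (H →L[ℂ] H)) := by
  rintro T ⟨K, ⟨p, hpC, h1, h2, rfl⟩, rfl⟩
  rwa [selfAdjoint_idem_eq_projCLM h1 h2]

lemma span_genSet_le : (Submodule.span ℂ (genSet C) : Set (H →L[ℂ] H)) ⊆ C := by
  have h : Submodule.span ℂ (genSet C) ≤ Subalgebra.toSubmodule C.toSubalgebra :=
    Submodule.span_le.mpr (genSet_subset C)
  exact fun x hx => h hx

lemma selfadjoint_mem_span {S : H →L[ℂ] H} (hSC : S ∈ C) (h1 : star S = S) :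
    S ∈ Submodule.span ℂ (genSet C) := by
  nth_rewrite 1 [selfadj_eq_sum_proj h1]
  refine Submodule.sum_mem _ fun μ hμ => Submodule.smul_mem _ _ (Submodule.subset_span ?_)
  refine ⟨Module.End.eigenspace (↑S : Module.End ℂ H) μ,
    ⟨projCLM _, ?_, star_projCLM _, projCLM_idem _, range_projCLM _⟩, rfl⟩
  rw [projCLM_eigenspace_eq_aeval h1 hμ]
  exact aeval_mem_starSubalgebra hSC _

lemma coe_eq_span : (C : Set (H →L[ℂ] H)) = ↑(Submodule.span ℂ (genSet C)) := by
  refine Set.Subset.antisymm ?_ (span_genSet_le C)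
  intro T hT
  have h2ne : (2 : ℂ) ≠ 0 := two_ne_zero
  set c : ℂ := (2 * Complex.I)⁻¹ with hc_def
  have hstar2 : star ((2 : ℂ)⁻¹) = (2 : ℂ)⁻¹ := by simp
  have hstarc : star c = -c := by
    rw [hc_def, star_inv₀]
    rw [show star (2 * Complex.I) = 2 * star Complex.I by
      rw [star_mul']; norm_num]
    rw [Complex.star_def, Complex.conj_I]
    rw [mul_neg, inv_neg]
  have hreC : (2 : ℂ)⁻¹ • (T + star T) ∈ C := by
    apply C.smul_mem
    exact add_mem hT (star_mem hT)
  have himC : c • (T - star T) ∈ C := by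
    apply C.smul_mem
    exact sub_mem hT (star_mem hT)
  have hre1 : star ((2 : ℂ)⁻¹ • (T + star T)) = (2 : ℂ)⁻¹ • (T + star T) := by
    rw [star_smul, star_add, star_star, hstar2, add_comm]
  have him1 : star (c • (T - star T)) = c • (T - star T) := by
    rw [star_smul, star_sub, star_star, hstarc, neg_smul, ← smul_neg, neg_sub]
  have hI2 : Complex.I * c = (2 : ℂ)⁻¹ := by
    rw [hc_def]
    field_simp
  have hdecomp : (2 : ℂ)⁻¹ • (T + star T) + Complex.I • (c • (T - star T)) = T := by
    rw [smul_smul, hI2]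
    module
  rw [← hdecomp]
  exact Submodule.add_mem _ (selfadjoint_mem_span C hreC hre1)
    (Submodule.smul_mem _ _ (selfadjoint_mem_span C himC him1))

end spanC


section surj

variable {L : Set (Submodule ℂ H)}

lemma decomp_of_mem (hcompl : ∀ K ∈ L, Kᗮ ∈ L)
    (hdist : ∀ K ∈ L, ∀ M ∈ L, ∀ N ∈ L, K ⊓ (M ⊔ N) = (K ⊓ M) ⊔ (K ⊓ N))
    {K M : Submodule ℂ H} (hK : K ∈ L) (hM : M ∈ L) :
    (K ⊓ M) ⊔ (M ⊓ Kᗮ) = M := by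
  have h := hdist M hM K hK Kᗮ (hcompl K hK)
  rw [Submodule.sup_orthogonal_of_hasOrthogonalProjection, inf_top_eq] at h
  rw [inf_comm K M]
  exact h.symm

lemma projL_mul (hcompl : ∀ K ∈ L, Kᗮ ∈ L)
    (hdist : ∀ K ∈ L, ∀ M ∈ L, ∀ N ∈ L, K ⊓ (M ⊔ N) = (K ⊓ M) ⊔ (K ⊓ N))
    {K M : Submodule ℂ H} (hK : K ∈ L) (hM : M ∈ L) :
    projCLM K * projCLM M = projCLM (K ⊓ M) :=
  projCLM_mul_projCLM (decomp_of_mem hcompl hdist hK hM)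

lemma finset_inf_mem (htop : ⊤ ∈ L) (hinf : ∀ K ∈ L, ∀ M ∈ L, K ⊓ M ∈ L)
    {ι : Type*} (F : Finset ι) (f : ι → Submodule ℂ H) (hf : ∀ i ∈ F, f i ∈ L) :
    F.inf f ∈ L := by
  induction F using Finset.cons_induction with
  | empty => simpa using htop
  | cons a s ha ih =>
    rw [Finset.inf_cons]
    exact hinf _ (hf a (Finset.mem_cons_self _ _)) _
      (ih fun i hi => hf i (Finset.mem_cons_of_mem hi))

lemma finset_sup_mem (hbot : ⊥ ∈ L) (hsup : ∀ K ∈ L, ∀ M ∈ L, K ⊔ M ∈ L)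
    {ι : Type*} (F : Finset ι) (f : ι → Submodule ℂ H) (hf : ∀ i ∈ F, f i ∈ L) :
    F.sup f ∈ L := by
  induction F using Finset.cons_induction with
  | empty => simpa using hbot
  | cons a s ha ih =>
    rw [Finset.sup_cons]
    exact hsup _ (hf a (Finset.mem_cons_self _ _)) _
      (ih fun i hi => hf i (Finset.mem_cons_of_mem hi))

noncomputable def atomSub {n : ℕ} (K : Fin n → Submodule ℂ H) (ε : Fin n → Bool) : Submodule ℂ H :=
  Finset.univ.inf fun i => cond (ε i) (K i) (K i)ᗮ

lemma atomSub_mem (htop : ⊤ ∈ L) (hinf : ∀ K ∈ L, ∀ M ∈ L, K ⊓ M ∈ L)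
    (hcompl : ∀ K ∈ L, Kᗮ ∈ L) {n : ℕ} {K : Fin n → Submodule ℂ H}
    (hK : ∀ i, K i ∈ L) (ε : Fin n → Bool) : atomSub K ε ∈ L := by
  refine finset_inf_mem htop hinf _ _ fun i _ => ?_
  cases h : ε i
  · simpa [h] using hcompl _ (hK i)
  · simpa [h] using hK i

lemma atomSub_le_true {n : ℕ} {K : Fin n → Submodule ℂ H} {ε : Fin n → Bool} {i : Fin n}
    (h : ε i = true) : atomSub K ε ≤ K i := by
  have h2 : atomSub K ε ≤ cond (ε i) (K i) (K i)ᗮ := Finset.inf_le (Finset.mem_univ i)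
  rw [h] at h2
  simpa using h2

lemma atomSub_le_false {n : ℕ} {K : Fin n → Submodule ℂ H} {ε : Fin n → Bool} {i : Fin n}
    (h : ε i = false) : atomSub K ε ≤ (K i)ᗮ := by
  have h2 : atomSub K ε ≤ cond (ε i) (K i) (K i)ᗮ := Finset.inf_le (Finset.mem_univ i)
  rw [h] at h2
  simpa using h2

lemma atomSub_ortho {n : ℕ} {K : Fin n → Submodule ℂ H} {ε ε' : Fin n → Bool}
    (hne : ε ≠ ε') : atomSub K ε ≤ (atomSub K ε')ᗮ := by
  obtain ⟨i, hi⟩ := Function.ne_iff.mp hne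
  cases h : ε i
  · have h' : ε' i = true := by revert hi; rw [h]; cases h'' : ε' i <;> simp [h'']
    exact (atomSub_le_false h).trans (Submodule.orthogonal_le (atomSub_le_true h'))
  · have h' : ε' i = false := by revert hi; rw [h]; cases h'' : ε' i <;> simp [h'']
    have h2 : K i ≤ (atomSub K ε')ᗮ := by
      have := Submodule.orthogonal_le (atomSub_le_false (K := K) h')
      rwa [Submodule.orthogonal_orthogonal] at this
    exact (atomSub_le_true h).trans h2

lemma sum_atoms (htop : ⊤ ∈ L) (hinf : ∀ K ∈ L, ∀ M ∈ L, K ⊓ M ∈ L)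
    (hcompl : ∀ K ∈ L, Kᗮ ∈ L)
    (hdist : ∀ K ∈ L, ∀ M ∈ L, ∀ N ∈ L, K ⊓ (M ⊔ N) = (K ⊓ M) ⊔ (K ⊓ N)) :
    ∀ {n : ℕ} (K : Fin n → Submodule ℂ H), (∀ i, K i ∈ L) →
      ∑ ε : Fin n → Bool, projCLM (atomSub K ε) = 1 := by
  intro n
  induction n with
  | zero =>
    intro K hK
    haveI : Unique (Fin 0 → Bool) :=
      ⟨⟨fun i => i.elim0⟩, fun ε => funext fun i => i.elim0⟩
    rw [Fintype.sum_unique]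
    show projCLM (atomSub K _) = 1
    rw [atomSub, Finset.univ_eq_empty, Finset.inf_empty, projCLM_top]
  | succ n ih =>
    intro K hK
    have hK'L : ∀ i : Fin n, K i.succ ∈ L := fun i => hK i.succ
    rw [← Equiv.sum_comp (Fin.consEquiv (fun _ : Fin (n + 1) => Bool))
      (fun ε => projCLM (atomSub K ε)), Fintype.sum_prod_type]
    have hcons : ∀ (b : Bool) (ε : Fin n → Bool),
        atomSub K (Fin.cons b ε) = (cond b (K 0) (K 0)ᗮ) ⊓ atomSub (fun i => K i.succ) ε := by
      intro b ε
      show Finset.univ.inf _ = _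
      rw [Fin.univ_succ, Finset.inf_cons, Finset.inf_map]
      have e0 : cond ((Fin.cons b ε : Fin (n + 1) → Bool) 0) (K 0) (K 0)ᗮ = cond b (K 0) (K 0)ᗮ := by
        rw [Fin.cons_zero]
      have e1 : ((fun i : Fin (n + 1) => cond ((Fin.cons b ε : Fin (n + 1) → Bool) i) (K i) (K i)ᗮ) ∘
          (⟨Fin.succ, Fin.succ_injective n⟩ : Fin n ↪ Fin (n + 1))) =
          fun i : Fin n => cond (ε i) (K i.succ) (K i.succ)ᗮ := by
        funext i
        show cond ((Fin.cons b ε : Fin (n + 1) → Bool) i.succ) (K i.succ) (K i.succ)ᗮ = _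
        rw [Fin.cons_succ]
      rw [e0, e1]
      rfl
    have hXmem : ∀ b : Bool, (cond b (K 0) (K 0)ᗮ) ∈ L := by
      intro b; cases b
      · simpa using hcompl _ (hK 0)
      · simpa using hK 0
    calc ∑ b : Bool, ∑ ε : Fin n → Bool,
            projCLM (atomSub K ((Fin.consEquiv (fun _ : Fin (n + 1) => Bool)) (b, ε)))
        = ∑ b : Bool, ∑ ε : Fin n → Bool,
            projCLM (cond b (K 0) (K 0)ᗮ) * projCLM (atomSub (fun i => K i.succ) ε) := by
          refine Finset.sum_congr rfl fun b _ => Finset.sum_congr rfl fun ε _ => ?_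
          have : (Fin.consEquiv (fun _ : Fin (n + 1) => Bool)) (b, ε) = Fin.cons b ε := rfl
          rw [this, hcons b ε,
            ← projL_mul hcompl hdist (hXmem b) (atomSub_mem htop hinf hcompl hK'L ε)]
      _ = ∑ b : Bool, projCLM (cond b (K 0) (K 0)ᗮ) *
            (∑ ε : Fin n → Bool, projCLM (atomSub (fun i => K i.succ) ε)) := by
          refine Finset.sum_congr rfl fun b _ => ?_
          rw [Finset.mul_sum]
      _ = ∑ b : Bool, projCLM (cond b (K 0) (K 0)ᗮ) * 1 := by
          rw [ih (fun i => K i.succ) hK'L]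
      _ = 1 := by
          rw [Fintype.sum_bool]
          simp only [mul_one, cond_true, cond_false]
          exact projCLM_add_orthogonal (K 0)

lemma proj_eq_sum_atoms (htop : ⊤ ∈ L) (hinf : ∀ K ∈ L, ∀ M ∈ L, K ⊓ M ∈ L)
    (hcompl : ∀ K ∈ L, Kᗮ ∈ L)
    (hdist : ∀ K ∈ L, ∀ M ∈ L, ∀ N ∈ L, K ⊓ (M ⊔ N) = (K ⊓ M) ⊔ (K ⊓ N))
    {n : ℕ} {K : Fin n → Submodule ℂ H} (hK : ∀ i, K i ∈ L) (j : Fin n) :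
    projCLM (K j) =
      ∑ ε : Fin n → Bool, if ε j = true then projCLM (atomSub K ε) else 0 := by
  have h1 : projCLM (K j) * (∑ ε : Fin n → Bool, projCLM (atomSub K ε)) = projCLM (K j) := by
    rw [sum_atoms htop hinf hcompl hdist K hK, mul_one]
  rw [← h1, Finset.mul_sum]
  refine Finset.sum_congr rfl fun ε _ => ?_
  cases h : ε j
  · rw [if_neg (by simp)]
    exact projCLM_mul_of_ortho (atomSub_le_false h)
  · rw [if_pos rfl]
    exact projCLM_mul_of_le (atomSub_le_true h)

end surj


section bigstep

variable {L : Set (Submodule ℂ H)}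

lemma range_mem_of_mem_spanL (hbot : ⊥ ∈ L) (htop : ⊤ ∈ L)
    (hinf : ∀ K ∈ L, ∀ M ∈ L, K ⊓ M ∈ L) (hsup : ∀ K ∈ L, ∀ M ∈ L, K ⊔ M ∈ L)
    (hcompl : ∀ K ∈ L, Kᗮ ∈ L)
    (hdist : ∀ K ∈ L, ∀ M ∈ L, ∀ N ∈ L, K ⊓ (M ⊔ N) = (K ⊓ M) ⊔ (K ⊓ N))
    {p : H →L[ℂ] H} (hp : p ∈ Submodule.span ℂ {T : H →L[ℂ] H | ∃ K ∈ L, T = projCLM K})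
    (h1 : star p = p) (h2 : p * p = p) : LinearMap.range (p : H →ₗ[ℂ] H) ∈ L := by
  classical
  obtain ⟨n, c, g, hg⟩ := Submodule.mem_span_set'.mp hp
  choose K hKL hKeq using fun i => (g i).2
  set d : (Fin n → Bool) → ℂ := fun ε => ∑ i, if ε i = true then c i else 0 with hd
  have heval : ∀ (e : (Fin n → Bool) → ℂ) (ε₀ : Fin n → Bool) (x : H),
      x ∈ atomSub K ε₀ →
      (∑ ε : Fin n → Bool, e ε • projCLM (atomSub K ε)) x = e ε₀ • x := by
    intro e ε₀ x hx
    rw [ContinuousLinearMap.sum_apply, Finset.sum_eq_single_of_mem ε₀ (Finset.mem_univ _)]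
    · rw [ContinuousLinearMap.smul_apply, projCLM_eq_self hx]
    · intro ε _ hne
      rw [ContinuousLinearMap.smul_apply,
        projCLM_eq_zero (atomSub_ortho (Ne.symm hne) hx), smul_zero]
  have hpsum : p = ∑ ε : Fin n → Bool, d ε • projCLM (atomSub K ε) := by
    rw [← hg]
    calc ∑ i, c i • (g i : H →L[ℂ] H) = ∑ i, c i • projCLM (K i) := by
          refine Finset.sum_congr rfl fun i _ => ?_; rw [hKeq i]
      _ = ∑ i, c i • ∑ ε : Fin n → Bool,
            (if ε i = true then projCLM (atomSub K ε) else 0) := by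
          refine Finset.sum_congr rfl fun i _ => ?_
          rw [← proj_eq_sum_atoms htop hinf hcompl hdist (fun i => hKL i) i]
      _ = ∑ i, ∑ ε : Fin n → Bool,
            (if ε i = true then c i else 0) • projCLM (atomSub K ε) := by
          refine Finset.sum_congr rfl fun i _ => ?_
          rw [Finset.smul_sum]
          refine Finset.sum_congr rfl fun ε _ => ?_
          by_cases h : ε i = true <;> simp [h]
      _ = ∑ ε : Fin n → Bool, ∑ i,
            (if ε i = true then c i else 0) • projCLM (atomSub K ε) := Finset.sum_comm
      _ = ∑ ε : Fin n → Bool, d ε • projCLM (atomSub K ε) := by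
          refine Finset.sum_congr rfl fun ε _ => ?_
          rw [← Finset.sum_smul]
  have hsq : p = ∑ ε : Fin n → Bool, (d ε * d ε) • projCLM (atomSub K ε) := by
    conv_lhs => rw [← h2]
    rw [hpsum, Finset.sum_mul_sum]
    refine Finset.sum_congr rfl fun ε _ => ?_
    rw [Finset.sum_eq_single_of_mem ε (Finset.mem_univ _)]
    · rw [smul_mul_smul_comm, projCLM_idem]
    · intro ε' _ hne
      rw [smul_mul_smul_comm, projCLM_mul_of_ortho (atomSub_ortho hne), smul_zero]
  have hd01 : ∀ ε : Fin n → Bool, atomSub K ε ≠ ⊥ → d ε = 0 ∨ d ε = 1 := by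
    intro ε hne
    obtain ⟨x, hx, hx0⟩ := (Submodule.ne_bot_iff _).mp hne
    have e1 : p x = d ε • x := by
      conv_lhs => rw [hpsum]
      exact heval d ε x hx
    have e2 : p x = (d ε * d ε) • x := by
      conv_lhs => rw [hsq]
      exact heval (fun ε => d ε * d ε) ε x hx
    have heq : d ε * d ε = d ε := smul_left_injective ℂ hx0 (e2.symm.trans e1)
    have hfac : d ε * (d ε - 1) = 0 := by ring_nf; linear_combination heq
    rcases mul_eq_zero.mp hfac with h | h
    · exact Or.inl h
    · exact Or.inr (by linear_combination h)
  set F : Finset (Fin n → Bool) :=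
    Finset.univ.filter (fun ε => d ε = 1 ∧ atomSub K ε ≠ ⊥) with hF
  have hpF : p = ∑ ε ∈ F, projCLM (atomSub K ε) := by
    rw [hF, Finset.sum_filter, hpsum]
    refine Finset.sum_congr rfl fun ε _ => ?_
    by_cases hbet : atomSub K ε = ⊥
    · rw [if_neg (by simp [hbet]), hbet, projCLM_bot, smul_zero]
    · rcases hd01 ε hbet with h0 | h1
      · rw [if_neg (by simp [h0]), h0, zero_smul]
      · rw [if_pos ⟨h1, hbet⟩, h1, one_smul]
  have hrange : LinearMap.range (p : H →ₗ[ℂ] H) = F.sup (atomSub K) := by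
    apply le_antisymm
    · rintro y ⟨x, rfl⟩
      have hy : p x = ∑ ε ∈ F, projCLM (atomSub K ε) x := by
        rw [hpF]; exact ContinuousLinearMap.sum_apply _ _ _
      rw [ContinuousLinearMap.coe_coe, hy]
      exact Submodule.sum_mem _ fun ε hε =>
        Finset.le_sup (f := atomSub K) hε (projCLM_mem _ x)
    · refine Finset.sup_le fun ε hε x hx => ?_
      rw [mem_range_iff_apply h2]
      have hx' : p x = ∑ ε' ∈ F, projCLM (atomSub K ε') x := by
        rw [hpF]; exact ContinuousLinearMap.sum_apply _ _ _
      rw [hx', Finset.sum_eq_single_of_mem ε hε]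
      · exact projCLM_eq_self hx
      · intro ε' _ hne
        exact projCLM_eq_zero (atomSub_ortho (Ne.symm hne) hx)
  rw [hrange]
  exact finset_sup_mem hbot hsup F _ fun ε _ =>
    atomSub_mem htop hinf hcompl (fun i => hKL i) ε

end bigstep


section CL

variable {L : Set (Submodule ℂ H)}

lemma comm_spanL (hcompl : ∀ K ∈ L, Kᗮ ∈ L)
    (hdist : ∀ K ∈ L, ∀ M ∈ L, ∀ N ∈ L, K ⊓ (M ⊔ N) = (K ⊓ M) ⊔ (K ⊓ N))
    {x y : H →L[ℂ] H}
    (hx : x ∈ Submodule.span ℂ {T : H →L[ℂ] H | ∃ K ∈ L, T = projCLM K})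
    (hy : y ∈ Submodule.span ℂ {T : H →L[ℂ] H | ∃ K ∈ L, T = projCLM K}) :
    x * y = y * x := by
  induction hx, hy using Submodule.span_induction₂ with
  | mem_mem a b ha hb =>
    obtain ⟨K, hK, rfl⟩ := ha
    obtain ⟨M, hM, rfl⟩ := hb
    rw [projL_mul hcompl hdist hK hM, projL_mul hcompl hdist hM hK, inf_comm]
  | zero_left y hy => rw [zero_mul, mul_zero]
  | zero_right x hx => rw [zero_mul, mul_zero]
  | add_left x y z hx hy hz h1 h2 => rw [add_mul, mul_add, h1, h2]
  | add_right x y z hx hy hz h1 h2 => rw [mul_add, add_mul, h1, h2]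
  | smul_left r x y hx hy h => rw [smul_mul_assoc, mul_smul_comm, h]
  | smul_right r x y hx hy h => rw [mul_smul_comm, smul_mul_assoc, h]

lemma mul_mem_spanL (hinf : ∀ K ∈ L, ∀ M ∈ L, K ⊓ M ∈ L)
    (hcompl : ∀ K ∈ L, Kᗮ ∈ L)
    (hdist : ∀ K ∈ L, ∀ M ∈ L, ∀ N ∈ L, K ⊓ (M ⊔ N) = (K ⊓ M) ⊔ (K ⊓ N))
    {x y : H →L[ℂ] H}
    (hx : x ∈ Submodule.span ℂ {T : H →L[ℂ] H | ∃ K ∈ L, T = projCLM K})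
    (hy : y ∈ Submodule.span ℂ {T : H →L[ℂ] H | ∃ K ∈ L, T = projCLM K}) :
    x * y ∈ Submodule.span ℂ {T : H →L[ℂ] H | ∃ K ∈ L, T = projCLM K} := by
  have hmul : Submodule.span ℂ {T : H →L[ℂ] H | ∃ K ∈ L, T = projCLM K} *
      Submodule.span ℂ {T : H →L[ℂ] H | ∃ K ∈ L, T = projCLM K} ≤
      Submodule.span ℂ {T : H →L[ℂ] H | ∃ K ∈ L, T = projCLM K} := by
    rw [Submodule.span_mul_span]
    refine Submodule.span_le.mpr ?_
    rintro T hT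
    obtain ⟨a, ha, b, hb, rfl⟩ := Set.mem_mul.mp hT
    obtain ⟨K, hK, rfl⟩ := ha
    obtain ⟨M, hM, rfl⟩ := hb
    exact Submodule.subset_span ⟨K ⊓ M, hinf K hK M hM,
      projL_mul hcompl hdist hK hM⟩
  exact hmul (Submodule.mul_mem_mul hx hy)

lemma star_mem_spanL {x : H →L[ℂ] H}
    (hx : x ∈ Submodule.span ℂ {T : H →L[ℂ] H | ∃ K ∈ L, T = projCLM K}) :
    star x ∈ Submodule.span ℂ {T : H →L[ℂ] H | ∃ K ∈ L, T = projCLM K} := by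
  induction hx using Submodule.span_induction with
  | mem T hT =>
    obtain ⟨K, hK, rfl⟩ := hT
    rw [star_projCLM]
    exact Submodule.subset_span ⟨K, hK, rfl⟩
  | zero => rw [star_zero]; exact Submodule.zero_mem _
  | add x y hx hy h1 h2 => rw [star_add]; exact Submodule.add_mem _ h1 h2
  | smul a x hx h => rw [star_smul]; exact Submodule.smul_mem _ _ h

variable (L) in
noncomputable def CLalg (htop : ⊤ ∈ L) (hinf : ∀ K ∈ L, ∀ M ∈ L, K ⊓ M ∈ L)
    (hcompl : ∀ K ∈ L, Kᗮ ∈ L)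
    (hdist : ∀ K ∈ L, ∀ M ∈ L, ∀ N ∈ L, K ⊓ (M ⊔ N) = (K ⊓ M) ⊔ (K ⊓ N)) :
    StarSubalgebra ℂ (H →L[ℂ] H) where
  toSubalgebra := (Submodule.span ℂ {T : H →L[ℂ] H | ∃ K ∈ L, T = projCLM K}).toSubalgebra
    (Submodule.subset_span ⟨⊤, htop, projCLM_top.symm⟩)
    (fun _ _ hx hy => mul_mem_spanL hinf hcompl hdist hx hy)
  star_mem' := fun hx => star_mem_spanL hx

lemma mem_CLalg {htop hinf hcompl hdist} {x : H →L[ℂ] H} :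
    x ∈ CLalg L htop hinf hcompl hdist ↔
      x ∈ Submodule.span ℂ {T : H →L[ℂ] H | ∃ K ∈ L, T = projCLM K} :=
  Iff.rfl

end CL
end ProjAux

open ProjAux in
/-- Sending a commutative unital star-subalgebra `C` of `H →L[ℂ] H` to the set
`Proj(C)` of ranges of its self-adjoint idempotents is a bijection onto the Boolean
subalgebras of the subspace lattice of `H`; its inverse sends a Boolean subalgebra `L`
to the linear span of the orthogonal projections `{ P_K | K ∈ L }`. -/
theorem commutative_starSubalgebra_proj_bijOn_boolean
    {H : Type*} [NormedAddCommGroup H] [InnerProductSpace ℂ H] [FiniteDimensional ℂ H] :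
    Set.BijOn
      (fun C : StarSubalgebra ℂ (H →L[ℂ] H) =>
        {K : Submodule ℂ H | ∃ p ∈ C, star p = p ∧ p * p = p ∧ LinearMap.range (p : H →ₗ[ℂ] H) = K})
      {C : StarSubalgebra ℂ (H →L[ℂ] H) | ∀ a ∈ C, ∀ b ∈ C, a * b = b * a}
      {L : Set (Submodule ℂ H) | ⊥ ∈ L ∧ ⊤ ∈ L ∧ (∀ K ∈ L, ∀ M ∈ L, K ⊓ M ∈ L) ∧
        (∀ K ∈ L, ∀ M ∈ L, K ⊔ M ∈ L) ∧ (∀ K ∈ L, Kᗮ ∈ L) ∧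
        (∀ K ∈ L, ∀ M ∈ L, ∀ N ∈ L, K ⊓ (M ⊔ N) = (K ⊓ M) ⊔ (K ⊓ N))} ∧
    ∀ C : StarSubalgebra ℂ (H →L[ℂ] H), (∀ a ∈ C, ∀ b ∈ C, a * b = b * a) →
      (C : Set (H →L[ℂ] H)) =
        ↑(Submodule.span ℂ
          {T : H →L[ℂ] H |
            ∃ K ∈ {K : Submodule ℂ H |
                ∃ p ∈ C, star p = p ∧ p * p = p ∧ LinearMap.range (p : H →ₗ[ℂ] H) = K},
              T = projCLM K}) := by
  constructor
  · refine ⟨?_, ?_, ?_⟩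
    · -- MapsTo
      intro C hC
      have hC' : ∀ a ∈ C, ∀ b ∈ C, a * b = b * a := hC
      refine ⟨⟨0, zero_mem _, star_zero _, mul_zero 0, ?_⟩,
        ⟨1, one_mem _, star_one _, mul_one 1, LinearMap.range_eq_top.mpr fun x => ⟨x, rfl⟩⟩,
        ?_, ?_, ?_, ?_⟩
      · ext x
        simp [LinearMap.mem_range, eq_comm]
      · rintro K ⟨p, hp, hp1, hp2, rfl⟩ M ⟨q, hq, hq1, hq2, rfl⟩
        have hpq := hC' p hp q hq
        exact ⟨p * q, mul_mem hp hq, by rw [star_mul, hp1, hq1]; exact hpq.symm,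
          mul_idem_of_comm hp2 hq2 hpq, range_mul_of_comm hp2 hq2 hpq⟩
      · rintro K ⟨p, hp, hp1, hp2, rfl⟩ M ⟨q, hq, hq1, hq2, rfl⟩
        have hpq := hC' p hp q hq
        exact ⟨p + q - p * q, sub_mem (add_mem hp hq) (mul_mem hp hq),
          by rw [star_sub, star_add, star_mul, hp1, hq1, ← hpq],
          sup_idem_of_comm hp2 hq2 hpq, range_sup_of_comm hp2 hq2 hpq⟩
      · rintro K ⟨p, hp, hp1, hp2, rfl⟩
        exact ⟨1 - p, sub_mem (one_mem _) hp, by rw [star_sub, star_one, hp1],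
          one_sub_idem hp2, range_one_sub hp1 hp2⟩
      · rintro K ⟨p, hp, hp1, hp2, rfl⟩ M ⟨q, hq, hq1, hq2, rfl⟩ N ⟨r, hr, hr1, hr2, rfl⟩
        have hpq := hC' p hp q hq
        have hpr := hC' p hp r hr
        have hqr := hC' q hq r hr
        have hs2 := sup_idem_of_comm hq2 hr2 hqr
        have hsC : q + r - q * r ∈ C := sub_mem (add_mem hq hr) (mul_mem hq hr)
        have hps := hC' p hp _ hsC
        have hpq2 := mul_idem_of_comm hp2 hq2 hpq
        have hpr2 := mul_idem_of_comm hp2 hr2 hpr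
        have hcomm2 := hC' (p * q) (mul_mem hp hq) (p * r) (mul_mem hp hr)
        have e : (p * q) * (p * r) = p * (q * r) := by
          calc (p * q) * (p * r) = p * (q * p) * r := by noncomm_ring
            _ = p * (p * q) * r := by rw [← hpq]
            _ = (p * p) * (q * r) := by noncomm_ring
            _ = p * (q * r) := by rw [hp2]
        have key : p * (q + r - q * r) = p * q + p * r - (p * q) * (p * r) := by
          rw [e]; noncomm_ring
        calc LinearMap.range (p : H →ₗ[ℂ] H) ⊓ (LinearMap.range (q : H →ₗ[ℂ] H) ⊔ LinearMap.range (r : H →ₗ[ℂ] H))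
            = LinearMap.range (p : H →ₗ[ℂ] H) ⊓ LinearMap.range ((q + r - q * r : H →L[ℂ] H) : H →ₗ[ℂ] H) := by
              rw [range_sup_of_comm hq2 hr2 hqr]
          _ = LinearMap.range ((p * (q + r - q * r) : H →L[ℂ] H) : H →ₗ[ℂ] H) :=
              (range_mul_of_comm hp2 hs2 hps).symm
          _ = LinearMap.range ((p * q + p * r - (p * q) * (p * r) : H →L[ℂ] H) : H →ₗ[ℂ] H) := by rw [key]
          _ = LinearMap.range ((p * q : H →L[ℂ] H) : H →ₗ[ℂ] H) ⊔ LinearMap.range ((p * r : H →L[ℂ] H) : H →ₗ[ℂ] H) :=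
              range_sup_of_comm hpq2 hpr2 hcomm2
          _ = (LinearMap.range (p : H →ₗ[ℂ] H) ⊓ LinearMap.range (q : H →ₗ[ℂ] H)) ⊔
              (LinearMap.range (p : H →ₗ[ℂ] H) ⊓ LinearMap.range (r : H →ₗ[ℂ] H)) := by
              rw [range_mul_of_comm hp2 hq2 hpq, range_mul_of_comm hp2 hr2 hpr]
    · -- InjOn
      intro C1 h1 C2 h2 heq
      apply SetLike.coe_injective
      rw [coe_eq_span C1, coe_eq_span C2]
      have hP : ProjSet C1 = ProjSet C2 := heq
      have hg : genSet C1 = genSet C2 := by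
        show {T | ∃ K ∈ ProjSet C1, T = projCLM K} = {T | ∃ K ∈ ProjSet C2, T = projCLM K}
        rw [hP]
      rw [hg]
    · -- SurjOn
      intro Lset hL
      obtain ⟨hbot, htop, hinf, hsup, hcompl, hdist⟩ := hL
      refine ⟨CLalg Lset htop hinf hcompl hdist, ?_, ?_⟩
      · intro a ha b hb
        exact comm_spanL hcompl hdist (mem_CLalg.mp ha) (mem_CLalg.mp hb)
      · ext K
        constructor
        · rintro ⟨p, hpC, h1, h2, rfl⟩
          exact range_mem_of_mem_spanL hbot htop hinf hsup hcompl hdist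
            (mem_CLalg.mp hpC) h1 h2
        · intro hK
          exact ⟨projCLM K, mem_CLalg.mpr (Submodule.subset_span ⟨K, hK, rfl⟩),
            star_projCLM K, projCLM_idem K, range_projCLM K⟩
  · intro C hC
    exact coe_eq_span C
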